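/- Law of large numbers for q-dependent divergences: if the rows U_i (i ≥ 0) are i.i.d., Y_i = (T(h*)U)_i ⊙ δ_i with i.i.d. noise independent of U, and E I(Y_q||(T(h)U)_q) < ∞, then the random criterion I_N(h) = (1/N) Σ_{i=0}^N I(Y_i||(T(h)U)_i) converges almost surely to E I(Y_q||(T(h)U)_q) as N → ∞. -/

import Mathlib

open scoped BigOperators
open MeasureTheory ProbabilityTheory
open Filter

/-- Csiszár I-divergence between nonnegative vectors (real-valued version, used where
all relevant quantities are finite). -/
noncomputable def IdivR {m : ℕ} (M N : Fin m → ℝ) : ℝ :=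
  ∑ α, (M α * Real.log (M α / N α) - M α + N α)

/-- The `i`-th row of the convolution `T(h)U`:
`(T(h)U)_{ij} = ∑_{k=0}^{min(i,q)} h_k U_{i-k,j}`, for `ℕ`-indexed rows. -/
def convRow (q m : ℕ) (h : Fin (q + 1) → ℝ) (U : ℕ → Fin m → ℝ) (i : ℕ) : Fin m → ℝ :=
  fun j => ∑ k : Fin (q + 1), if (k : ℕ) ≤ i then h k * U (i - (k : ℕ)) j else 0

namespace LLNaux

variable {Ω : Type*} [MeasurableSpace Ω] {μ : MeasureTheory.Measure Ω}

open MeasureTheory ProbabilityTheory Filter in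
lemma iIndepFun_reindex {ι ι' β : Type*} [mβ : MeasurableSpace β] {f : ι → Ω → β}
    (h : iIndepFun (m := fun _ => mβ) f μ) (e : ι' → ι) (he : Function.Injective e) :
    iIndepFun (m := fun _ => mβ) (fun k => f (e k)) μ := by
  classical
  rw [iIndepFun_iff_measure_inter_preimage_eq_mul] at h ⊢
  intro S sets hsets
  have hkey := h (S.image e)
    (sets := Function.extend e sets fun _ => Set.univ) ?_
  · have hInter : (⋂ i ∈ S.image e, f i ⁻¹' Function.extend e sets (fun _ => Set.univ) i)
        = ⋂ k ∈ S, f (e k) ⁻¹' sets k := by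
      ext ω
      simp only [Set.mem_iInter, Finset.mem_image, Set.mem_preimage]
      constructor
      · intro hx k hk
        have := hx (e k) ⟨k, hk, rfl⟩
        rwa [he.extend_apply] at this
      · rintro hx i ⟨k, hk, rfl⟩
        rw [he.extend_apply]
        exact hx k hk
    have hProd : ∏ i ∈ S.image e, μ (f i ⁻¹' Function.extend e sets (fun _ => Set.univ) i)
        = ∏ k ∈ S, μ (f (e k) ⁻¹' sets k) := by
      rw [Finset.prod_image (fun k _ k' _ hkk => he hkk)]
      refine Finset.prod_congr rfl fun k _ => by rw [he.extend_apply]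
    rw [hInter, hProd] at hkey
    exact hkey
  · intro i hi
    rcases Finset.mem_image.1 hi with ⟨k, hk, rfl⟩
    rw [he.extend_apply]
    exact hsets k hk

open MeasureTheory ProbabilityTheory Filter in
lemma map_tuple_eq_pi {ι β : Type*} [Fintype ι] [mβ : MeasurableSpace β]
    [IsProbabilityMeasure μ] {f : ι → Ω → β} (hf : ∀ i, Measurable (f i))
    (h : iIndepFun (m := fun _ => mβ) f μ) :
    μ.map (fun ω k => f k ω) = Measure.pi (fun k => μ.map (f k)) := by
  haveI : ∀ k, IsProbabilityMeasure (μ.map (f k)) :=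
    fun k => Measure.isProbabilityMeasure_map (hf k).aemeasurable
  refine (Measure.pi_eq fun s hs => ?_).symm
  have htuple : Measurable (fun ω k => f k ω) := measurable_pi_lambda _ hf
  rw [Measure.map_apply htuple (MeasurableSet.univ_pi hs)]
  have : (fun ω k => f k ω) ⁻¹' Set.pi Set.univ s = ⋂ k, f k ⁻¹' s k := by
    ext ω; simp [Set.mem_pi]
  rw [this, h.meas_iInter fun k => ⟨s k, hs k, rfl⟩]
  exact Finset.prod_congr rfl fun k _ => (Measure.map_apply (hf k) (hs k)).symm

open Filter in
lemma cesaro_residue (d : ℕ) (hd : 0 < d) (a : ℕ → ℝ) (E : ℝ)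
    (H : ∀ r, r < d → Tendsto (fun n : ℕ => (∑ k ∈ Finset.range n, a (d * k + r)) / n)
      atTop (nhds E)) :
    Tendsto (fun n : ℕ => (∑ i ∈ Finset.range n, a i) / n) atTop (nhds E) := by
  classical
  set c : ℕ → ℕ → ℕ := fun r n => n / d + if r < n % d then 1 else 0 with hc
  have hc_succ : ∀ r n, r < d → c r (n + 1) = c r n + if n % d = r then 1 else 0 := by
    intro r n hr
    have ht : n % d < d := Nat.mod_lt _ hd
    by_cases h1 : n % d + 1 < d
    · have e1 : n + 1 = (n % d + 1) + d * (n / d) := by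
        have := Nat.div_add_mod n d; omega
      have h2 : (n + 1) / d = n / d := by
        rw [e1, Nat.add_mul_div_left _ _ hd, Nat.div_eq_of_lt h1, zero_add]
      have h3 : (n + 1) % d = n % d + 1 := by
        rw [e1, Nat.add_mul_mod_self_left, Nat.mod_eq_of_lt h1]
      simp only [hc, h2, h3]
      split_ifs <;> omega
    · have h1' : n % d + 1 = d := by omega
      have e1 : n + 1 = d * (n / d + 1) := by
        rw [Nat.mul_add, Nat.mul_one]
        have := Nat.div_add_mod n d; omega
      have h2 : (n + 1) / d = n / d + 1 := by rw [e1, Nat.mul_div_cancel_left _ hd]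
      have h3 : (n + 1) % d = 0 := by rw [e1]; exact Nat.mul_mod_right _ _
      simp only [hc, h2, h3]
      split_ifs <;> omega
  have hpart : ∀ n, ∑ i ∈ Finset.range n, a i
      = ∑ r ∈ Finset.range d, ∑ k ∈ Finset.range (c r n), a (d * k + r) := by
    intro n
    induction n with
    | zero => simp [hc]
    | succ n ih =>
      rw [Finset.sum_range_succ, ih]
      have hstep : ∀ r ∈ Finset.range d,
          ∑ k ∈ Finset.range (c r (n + 1)), a (d * k + r)
          = ∑ k ∈ Finset.range (c r n), a (d * k + r)
            + if n % d = r then a n else 0 := by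
        intro r hr
        rw [hc_succ r n (Finset.mem_range.1 hr)]
        by_cases h : n % d = r
        · rw [if_pos h, if_pos h, Finset.sum_range_succ]
          have hcr : c r n = n / d := by
            simp only [hc]
            rw [if_neg (by omega), add_zero]
          rw [hcr]
          congr 1
          rw [← h]
          exact congrArg a (Nat.div_add_mod n d)
        · rw [if_neg h, if_neg h, add_zero, add_zero]
      rw [Finset.sum_congr rfl hstep, Finset.sum_add_distrib, Finset.sum_ite_eq]
      rw [if_pos (Finset.mem_range.2 (Nat.mod_lt _ hd))]
  -- bounds on d * c r n
  have hbd : ∀ r n, n ≤ d * c r n + d ∧ d * c r n ≤ n + d := by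
    intro r n
    have h1 : d * (n / d) ≤ n := Nat.mul_div_le n d
    have h2 : n < d * (n / d) + d := by
      have := Nat.div_add_mod n d
      have := Nat.mod_lt n hd
      omega
    constructor
    · have : d * (n / d) ≤ d * c r n := Nat.mul_le_mul_left d (Nat.le_add_right _ _)
      omega
    · have h3 : c r n ≤ n / d + 1 := by simp only [hc]; split_ifs <;> omega
      calc d * c r n ≤ d * (n / d + 1) := Nat.mul_le_mul_left d h3
        _ = d * (n / d) + d := by ring
        _ ≤ n + d := by omega
  have hc_top : ∀ r, Tendsto (fun n => c r n) atTop atTop := by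
    intro r
    refine tendsto_atTop.2 fun b => eventually_atTop.2 ⟨d * b, fun n hn => ?_⟩
    have : b ≤ n / d := (Nat.le_div_iff_mul_le hd).2 (by rwa [Nat.mul_comm])
    exact le_trans this (Nat.le_add_right _ _)
  -- real limit of c r n / n
  have hcn : ∀ r, Tendsto (fun n : ℕ => (c r n : ℝ) / n) atTop (nhds (1 / d)) := by
    intro r
    have h0 : Tendsto (fun n : ℕ => (c r n : ℝ) / n - 1 / d) atTop (nhds 0) := by
      refine squeeze_zero_norm' (a := fun n : ℕ => 1 / (n : ℝ)) ?_ tendsto_one_div_atTop_nhds_zero_nat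
      filter_upwards [eventually_ge_atTop 1] with n hn
      have hnR : (0 : ℝ) < n := by exact_mod_cast hn
      have hdR : (0 : ℝ) < d := by exact_mod_cast hd
      obtain ⟨hb1, hb2⟩ := hbd r n
      have hb1R : (n : ℝ) ≤ d * c r n + d := by exact_mod_cast hb1
      have hb2R : (d : ℝ) * c r n ≤ n + d := by exact_mod_cast hb2
      have heq : (c r n : ℝ) / n - 1 / d = (d * c r n - n) / (d * n) := by
        field_simp
      rw [Real.norm_eq_abs, heq, abs_div, abs_of_pos (by positivity : (0:ℝ) < d * n)]
      rw [div_le_div_iff₀ (by positivity) hnR]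
      have habs : |(d : ℝ) * c r n - n| ≤ d := abs_le.2 ⟨by linarith, by linarith⟩
      calc |(d : ℝ) * c r n - n| * n ≤ d * n := by
            exact mul_le_mul_of_nonneg_right habs (le_of_lt hnR)
        _ = 1 * (d * n) := by ring
    have := h0.add (tendsto_const_nhds : Tendsto (fun _ : ℕ => (1 : ℝ) / d) atTop (nhds ((1 : ℝ) / d)))
    simpa using this
  -- combine
  have hsum : Tendsto (fun n : ℕ => ∑ r ∈ Finset.range d,
      ((c r n : ℝ) / n) * ((∑ k ∈ Finset.range (c r n), a (d * k + r)) / (c r n)))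
      atTop (nhds (∑ _r ∈ Finset.range d, (1 / d) * E)) := by
    refine tendsto_finset_sum _ fun r hr => ?_
    exact (hcn r).mul ((H r (Finset.mem_range.1 hr)).comp (tendsto_natCast_atTop_atTop.comp (hc_top r)))
  have hEsum : (∑ _r ∈ Finset.range d, (1 / (d : ℝ)) * E) = E := by
    rw [Finset.sum_const, Finset.card_range, nsmul_eq_mul]
    have hdR : (d : ℝ) ≠ 0 := by positivity
    field_simp
  rw [hEsum] at hsum
  refine hsum.congr' ?_
  filter_upwards [eventually_ge_atTop d] with n hn
  rw [hpart n, Finset.sum_div]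
  refine Finset.sum_congr rfl fun r _ => ?_
  have hc0 : 0 < c r n := by
    have : 1 ≤ n / d := (Nat.le_div_iff_mul_le hd).2 (by omega)
    simp only [hc]; omega
  have hcR : (c r n : ℝ) ≠ 0 := by positivity
  rw [div_mul_div_comm, mul_comm ((n : ℝ)) (c r n : ℝ), mul_div_mul_left _ _ hcR]

open MeasureTheory in
lemma measurable_IdivR (m : ℕ) :
    Measurable (fun p : (Fin m → ℝ) × (Fin m → ℝ) => IdivR p.1 p.2) := by
  unfold IdivR
  refine Finset.measurable_sum _ fun α _ => ?_
  have h1 : Measurable fun p : (Fin m → ℝ) × (Fin m → ℝ) => p.1 α :=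
    (measurable_pi_apply α).comp measurable_fst
  have h2 : Measurable fun p : (Fin m → ℝ) × (Fin m → ℝ) => p.2 α :=
    (measurable_pi_apply α).comp measurable_snd
  exact ((h1.mul (Real.measurable_log.comp (h1.div h2))).sub h1).add h2

open MeasureTheory ProbabilityTheory in
lemma indepFun_comp_of_sep {Ω ι β γ γ' : Type*} [MeasurableSpace Ω] [mβ : MeasurableSpace β]
    [mγ : MeasurableSpace γ] [mγ' : MeasurableSpace γ']
    {μ : Measure Ω} {G : ι → Ω → β} (hGmeas : ∀ p, Measurable (G p))
    (hG : iIndepFun (m := fun _ => mβ) G μ) {n n' : ℕ} (ea : Fin n → ι) (eb : Fin n' → ι)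
    (hsep : ∀ k k', ea k ≠ eb k')
    (κa : (Fin n → β) → γ) (κb : (Fin n' → β) → γ')
    (hκa : Measurable κa) (hκb : Measurable κb) :
    IndepFun (fun ω => κa (fun k => G (ea k) ω)) (fun ω => κb (fun k => G (eb k) ω)) μ := by
  classical
  set S : Finset ι := Finset.image ea Finset.univ with hS
  set T : Finset ι := Finset.image eb Finset.univ with hT
  have hdisj : Disjoint S T := by
    rw [Finset.disjoint_left]
    rintro p hp hpT
    simp only [hS, hT, Finset.mem_image, Finset.mem_univ, true_and] at hp hpT
    obtain ⟨k, hk⟩ := hp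
    obtain ⟨k', hk'⟩ := hpT
    exact hsep k k' (hk.trans hk'.symm)
  have hamem : ∀ k, ea k ∈ S := fun k => Finset.mem_image_of_mem _ (Finset.mem_univ k)
  have hbmem : ∀ k, eb k ∈ T := fun k => Finset.mem_image_of_mem _ (Finset.mem_univ k)
  have hind := (hG.indepFun_finset S T hdisj hGmeas).comp
    (φ := fun v : (∀ _p : (S : Finset ι), β) => κa (fun k => v ⟨ea k, hamem k⟩))
    (ψ := fun v : (∀ _p : (T : Finset ι), β) => κb (fun k => v ⟨eb k, hbmem k⟩))
    (hκa.comp (measurable_pi_lambda _ fun k => measurable_pi_apply _))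
    (hκb.comp (measurable_pi_lambda _ fun k => measurable_pi_apply _))
  exact hind

end LLNaux

/-- law of large numbers for q-dependent divergences.  If the rows `U_i`
are i.i.d., `Y_i = (T(h*)U)_i ⊙ δ_i` with i.i.d. noise independent of `U`, and the
divergence at lag `q` is integrable, then
`I_N(h) = (1/N) ∑_{i=0}^N I(Y_i‖(T(h)U)_i) → E I(Y_q‖(T(h)U)_q)` almost surely. -/
theorem lln_q_dependent
    {Ω : Type*} [MeasurableSpace Ω] (μ : Measure Ω) [IsProbabilityMeasure μ]
    (q m : ℕ)
    (U : ℕ → Ω → (Fin m → ℝ)) (δ : ℕ → Ω → (Fin m → ℝ))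
    (hmeasU : ∀ i, Measurable (U i)) (hmeasδ : ∀ i, Measurable (δ i))
    (hU_nonneg : ∀ i ω j, 0 ≤ U i ω j) (hδ_nonneg : ∀ i ω j, 0 ≤ δ i ω j)
    (hindep : iIndepFun
      (m := fun p : ℕ ⊕ ℕ =>
        Sum.rec (motive := fun p => MeasurableSpace (Sum.elim (fun _ => Fin m → ℝ) (fun _ => Fin m → ℝ) p))
          (fun _ => (inferInstance : MeasurableSpace (Fin m → ℝ)))
          (fun _ => (inferInstance : MeasurableSpace (Fin m → ℝ))) p)
      (fun p => Sum.rec (motive := fun p => Ω → Sum.elim (fun _ => Fin m → ℝ) (fun _ => Fin m → ℝ) p)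
          (fun i => U i) (fun i => δ i) p) μ)
    (hUiid : ∀ i, IdentDistrib (U i) (U 0) μ μ)
    (hδiid : ∀ i, IdentDistrib (δ i) (δ 0) μ μ)
    (hstar h : Fin (q + 1) → ℝ)
    (hstar_nonneg : ∀ k, 0 ≤ hstar k) (h_nonneg : ∀ k, 0 ≤ h k)
    (Y : ℕ → Ω → (Fin m → ℝ))
    (hY : ∀ i ω, Y i ω = fun j => convRow q m hstar (fun l => U l ω) i j * δ i ω j)
    (hint : Integrable
      (fun ω => IdivR (Y q ω) (convRow q m h (fun l => U l ω) q)) μ) :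
    ∀ᵐ ω ∂μ, Filter.Tendsto
      (fun n : ℕ => (1 / (n : ℝ)) *
        ∑ i ∈ Finset.range (n + 1), IdivR (Y i ω) (convRow q m h (fun l => U l ω) i))
      Filter.atTop
      (nhds (∫ ω, IdivR (Y q ω) (convRow q m h (fun l => U l ω) q) ∂μ)) := by
  classical
  set F : ℕ → Ω → ℝ := fun i ω => IdivR (Y i ω) (convRow q m h (fun l => U l ω) i) with hF
  set G : ℕ ⊕ ℕ → Ω → (Fin m → ℝ) := fun p => Sum.elim U δ p with hGdef
  have hGmeas : ∀ p, Measurable (G p) := by rintro (i | i); exacts [hmeasU i, hmeasδ i]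
  -- transport independence to the constant-codomain family `G`
  have hG : iIndepFun (m := fun _ : ℕ ⊕ ℕ => (inferInstance : MeasurableSpace (Fin m → ℝ))) G μ := by
    have h2 := (iIndepFun_iff_iIndep _ _ _).1 hindep
    rw [iIndepFun_iff_iIndep]
    convert h2 using 1
    funext p
    cases p <;> rfl
  -- index maps
  set e : ℕ → Fin (q + 2) → ℕ ⊕ ℕ :=
    fun i k => if (k : ℕ) ≤ q then Sum.inl (i - (k : ℕ)) else Sum.inr i with he_def
  have he_inj : ∀ i, q ≤ i → Function.Injective (e i) := by
    intro i hi k k' hkk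
    have hk2 := k.isLt
    have hk2' := k'.isLt
    simp only [he_def] at hkk
    by_cases h1 : (k : ℕ) ≤ q <;> by_cases h2 : (k' : ℕ) ≤ q
    · rw [if_pos h1, if_pos h2] at hkk
      have h3 := Sum.inl.inj hkk
      exact Fin.ext (by omega)
    · rw [if_pos h1, if_neg h2] at hkk
      exact absurd hkk (by simp)
    · rw [if_neg h1, if_pos h2] at hkk
      exact absurd hkk (by simp)
    · exact Fin.ext (by omega)
  set W : ℕ → Fin (q + 2) → Ω → (Fin m → ℝ) := fun i k => G (e i k) with hW
  have hWmeas : ∀ i k, Measurable (W i k) := fun i k => hGmeas _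
  have hWindep : ∀ i, q ≤ i → iIndepFun (m := fun _ => (inferInstance : MeasurableSpace (Fin m → ℝ))) (W i) μ :=
    fun i hi => LLNaux.iIndepFun_reindex hG (e i) (he_inj i hi)
  have htuple_meas : ∀ i, Measurable (fun ω (k : Fin (q + 2)) => W i k ω) :=
    fun i => measurable_pi_lambda _ fun k => hWmeas i k
  -- identical marginals
  have hmarg : ∀ i k, q ≤ i → μ.map (W i k) = μ.map (W q k) := by
    intro i k hi
    by_cases hk : (k : ℕ) ≤ q
    · have h1 : W i k = U (i - (k : ℕ)) := by simp [hW, hGdef, he_def, if_pos hk]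
      have h2 : W q k = U (q - (k : ℕ)) := by simp [hW, hGdef, he_def, if_pos hk]
      rw [h1, h2, (hUiid (i - (k : ℕ))).map_eq, (hUiid (q - (k : ℕ))).map_eq]
    · have h1 : W i k = δ i := by simp [hW, hGdef, he_def, if_neg hk]
      have h2 : W q k = δ q := by simp [hW, hGdef, he_def, if_neg hk]
      rw [h1, h2, (hδiid i).map_eq, (hδiid q).map_eq]
  have htuple_id : ∀ i, q ≤ i →
      IdentDistrib (fun ω (k : Fin (q + 2)) => W i k ω) (fun ω k => W q k ω) μ μ := by
    intro i hi
    refine ⟨(htuple_meas i).aemeasurable, (htuple_meas q).aemeasurable, ?_⟩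
    rw [LLNaux.map_tuple_eq_pi (fun k => hWmeas i k) (hWindep i hi),
      LLNaux.map_tuple_eq_pi (fun k => hWmeas q k) (hWindep q le_rfl)]
    congr 1
    funext k
    exact hmarg i k hi
  -- the fixed measurable functional κ
  set κ : (Fin (q + 2) → (Fin m → ℝ)) → ℝ := fun v =>
    IdivR (fun j => (∑ k : Fin (q + 1), hstar k * v k.castSucc j) * v (Fin.last (q + 1)) j)
      (fun j => ∑ k : Fin (q + 1), h k * v k.castSucc j) with hκ
  have hκmeas : Measurable κ := by
    have hev : ∀ (k : Fin (q + 2)) (j : Fin m),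
        Measurable fun v : Fin (q + 2) → Fin m → ℝ => v k j := fun k j =>
      (measurable_pi_apply j).comp (measurable_pi_apply k)
    have hA : Measurable fun v : Fin (q + 2) → (Fin m → ℝ) =>
        (fun j => (∑ k : Fin (q + 1), hstar k * v k.castSucc j) * v (Fin.last (q + 1)) j : Fin m → ℝ) := by
      refine measurable_pi_lambda _ fun j => ?_
      exact (Finset.measurable_sum _ fun k _ =>
        (measurable_const.mul (hev (Fin.castSucc k) j))).mul (hev (Fin.last (q + 1)) j)
    have hB : Measurable fun v : Fin (q + 2) → (Fin m → ℝ) =>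
        (fun j => ∑ k : Fin (q + 1), h k * v k.castSucc j : Fin m → ℝ) := by
      refine measurable_pi_lambda _ fun j => ?_
      exact Finset.measurable_sum _ fun k _ => measurable_const.mul (hev (Fin.castSucc k) j)
    exact (LLNaux.measurable_IdivR m).comp (hA.prodMk hB)
  -- representation of F i via κ for i ≥ q
  have hconv : ∀ (h' : Fin (q + 1) → ℝ) (i : ℕ), q ≤ i → ∀ ω j,
      convRow q m h' (fun l => U l ω) i j = ∑ k : Fin (q + 1), h' k * U (i - (k : ℕ)) ω j := by
    intro h' i hi ω j
    refine Finset.sum_congr rfl fun k _ => ?_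
    rw [if_pos (le_trans (Fin.is_le k) hi)]
  have hWc : ∀ i (k : Fin (q + 1)) ω, q ≤ i → W i k.castSucc ω = U (i - (k : ℕ)) ω := by
    intro i k ω hi
    simp [hW, hGdef, he_def, Fin.is_le k]
  have hWlast : ∀ i ω, W i (Fin.last (q + 1)) ω = δ i ω := by
    intro i ω
    have hk : ¬ ((Fin.last (q + 1) : Fin (q + 2)) : ℕ) ≤ q := by simp
    simp [hW, hGdef, he_def, if_neg hk]
  have hrep : ∀ i, q ≤ i → F i = fun ω => κ (fun k => W i k ω) := by
    intro i hi
    funext ω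
    simp only [hF, hκ]
    congr 1
    · funext j
      rw [hY i ω]
      simp only
      rw [hconv hstar i hi ω j]
      congr 1
      · refine Finset.sum_congr rfl fun k _ => ?_
        rw [hWc i k ω hi]
      · rw [hWlast i ω]
    · funext j
      rw [hconv h i hi ω j]
      refine Finset.sum_congr rfl fun k _ => ?_
      rw [hWc i k ω hi]
  -- identical distribution of the F i, i ≥ q
  have hFid : ∀ i, q ≤ i → IdentDistrib (F i) (F q) μ μ := by
    intro i hi
    rw [hrep i hi, hrep q le_rfl]
    exact (htuple_id i hi).comp hκmeas
  -- independence of F a and F b for well-separated a b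
  have hFindep : ∀ a b, q ≤ a → a + q < b → IndepFun (F a) (F b) μ := by
    intro a b ha hab
    have hb : q ≤ b := by omega
    have hsep : ∀ k k' : Fin (q + 2), e a k ≠ e b k' := by
      intro k k' hkk
      have hk2 := k.isLt
      have hk2' := k'.isLt
      simp only [he_def] at hkk
      by_cases h1 : (k : ℕ) ≤ q <;> by_cases h2 : (k' : ℕ) ≤ q
      · rw [if_pos h1, if_pos h2] at hkk
        have h3 := Sum.inl.inj hkk
        omega
      · rw [if_pos h1, if_neg h2] at hkk
        exact absurd hkk (by simp)
      · rw [if_neg h1, if_pos h2] at hkk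
        exact absurd hkk (by simp)
      · rw [if_neg h1, if_neg h2] at hkk
        have h3 := Sum.inr.inj hkk
        omega
    have hind := LLNaux.indepFun_comp_of_sep hGmeas hG (e a) (e b) hsep κ κ hκmeas hκmeas
    rw [hrep a ha, hrep b hb]
    exact hind
  -- strong law along each residue class
  set d : ℕ := q + 1 with hd
  set EI : ℝ := ∫ ω, F q ω ∂μ with hEI
  have hslln : ∀ r, r < d → ∀ᵐ ω ∂μ, Tendsto
      (fun n : ℕ => (∑ k ∈ Finset.range n, F (q + (d * k + r)) ω) / n) atTop (nhds EI) := by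
    intro r hr
    set X : ℕ → Ω → ℝ := fun k => F (q + (d * k + r)) with hX
    have hXid : ∀ k, IdentDistrib (X k) (F q) μ μ := fun k => hFid _ (by omega)
    have hint0 : Integrable (X 0) μ := (hXid 0).integrable_iff.2 hint
    have hpair : Pairwise (Function.onFun (IndepFun · · μ) X) := by
      intro k k' hkk
      have key : ∀ k k' : ℕ, k < k' → IndepFun (X k) (X k') μ := by
        intro k k' hlt
        refine hFindep _ _ (by omega) ?_
        have h1 : d * k + d ≤ d * k' := by
          calc d * k + d = d * (k + 1) := by ring
            _ ≤ d * k' := Nat.mul_le_mul_left d hlt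
        omega
      rcases lt_or_gt_of_ne hkk with hlt | hlt
      · exact key k k' hlt
      · exact (key k' k hlt).symm
    have hident : ∀ k, IdentDistrib (X k) (X 0) μ μ := fun k => (hXid k).trans (hXid 0).symm
    have H := strong_law_ae_real X hint0 hpair hident
    have hEq : (μ[X 0]) = EI := (hXid 0).integral_eq
    rw [hEq] at H
    exact H
  have hae : ∀ᵐ ω ∂μ, ∀ r, r < d → Tendsto
      (fun n : ℕ => (∑ k ∈ Finset.range n, F (q + (d * k + r)) ω) / n) atTop (nhds EI) := by
    rw [ae_all_iff]
    intro r
    by_cases hr : r < d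
    · exact (hslln r hr).mono fun ω hω _ => hω
    · exact Eventually.of_forall fun ω hr' => absurd hr' hr
  filter_upwards [hae] with ω hω
  -- pure analysis from here on
  have hcomb : Tendsto (fun n : ℕ => (∑ i ∈ Finset.range n, F (q + i) ω) / n) atTop (nhds EI) :=
    LLNaux.cesaro_residue d (by omega) (fun i => F (q + i) ω) EI (fun r hr => hω r hr)
  set C : ℝ := ∑ i ∈ Finset.range q, F i ω with hC
  have hsplit : ∀ N, q ≤ N → ∑ i ∈ Finset.range (N + 1), F i ω
      = C + ∑ i ∈ Finset.range (N + 1 - q), F (q + i) ω := by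
    intro N hN
    rw [← Finset.sum_range_add_sum_Ico (fun i => F i ω) (show q ≤ N + 1 by omega)]
    congr 1
    rw [Finset.sum_Ico_eq_sum_range]
  have h1 : Tendsto (fun N : ℕ => C * (1 / (N : ℝ))) atTop (nhds 0) := by
    have := (tendsto_const_nhds : Tendsto (fun _ : ℕ => C) atTop (nhds C)).mul
      tendsto_one_div_atTop_nhds_zero_nat
    simpa using this
  have h2 : Tendsto (fun N : ℕ => ((N + 1 - q : ℕ) : ℝ) / N) atTop (nhds 1) := by
    have hbase : Tendsto (fun N : ℕ => 1 + (1 - (q : ℝ)) * (1 / N)) atTop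
        (nhds (1 + (1 - (q : ℝ)) * 0)) :=
      tendsto_const_nhds.add (tendsto_const_nhds.mul tendsto_one_div_atTop_nhds_zero_nat)
    rw [show (1 : ℝ) + (1 - (q : ℝ)) * 0 = 1 by ring] at hbase
    refine hbase.congr' ?_
    filter_upwards [eventually_ge_atTop (q + 1)] with N hN
    have hN0 : (N : ℝ) ≠ 0 := Nat.cast_ne_zero.2 (by omega)
    have hcast : ((N + 1 - q : ℕ) : ℝ) = (N : ℝ) + 1 - q := by
      have : q ≤ N + 1 := by omega
      push_cast [Nat.cast_sub this]
      ring
    rw [hcast]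
    field_simp
    ring
  have h3 : Tendsto (fun N : ℕ => (∑ i ∈ Finset.range (N + 1 - q), F (q + i) ω)
      / ((N + 1 - q : ℕ) : ℝ)) atTop (nhds EI) := by
    refine hcomb.comp ?_
    exact (tendsto_sub_atTop_nat q).comp (tendsto_add_atTop_nat 1)
  have hfinal : Tendsto (fun N : ℕ => C * (1 / (N : ℝ))
      + (((N + 1 - q : ℕ) : ℝ) / N) * ((∑ i ∈ Finset.range (N + 1 - q), F (q + i) ω)
        / ((N + 1 - q : ℕ) : ℝ))) atTop (nhds EI) := by
    have := h1.add (h2.mul h3)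
    simpa using this
  refine hfinal.congr' ?_
  filter_upwards [eventually_ge_atTop (q + 1)] with N hN
  have hN0 : (N : ℝ) ≠ 0 := Nat.cast_ne_zero.2 (by omega)
  have hNq0 : ((N + 1 - q : ℕ) : ℝ) ≠ 0 := Nat.cast_ne_zero.2 (by omega)
  rw [hsplit N (by omega)]
  field_simp
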